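/- There exist universal constants 0 < c < C such that the following holds. For each pair of integers n ≥ 2 and k ≥ 1, let T(n,k) = Z_1 + ... + Z_k where Z_1, ..., Z_k are i.i.d. copies of Z(n). Then for any sequences of integers (n_j), (k_j) with n_j ≥ 2, k_j ≥ 1 and n_j + k_j → ∞, the probability P( c · k_j · ln(n_j) ≤ T(n_j,k_j) ≤ C · k_j · ln(n_j) ) tends to 1 as j → ∞. -/

import Mathlib

open MeasureTheory ProbabilityTheory Filter Set
open scoped ENNReal
set_option linter.unusedSectionVars false
set_option maxHeartbeats 1000000


/-- The Markov chain modeling the CD-P heuristic (unbounded reach), driven by a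
sequence `U` of i.i.d. uniform random variables on `[0,1]`: it starts at `n`, and from a
state `m ≥ 1` it jumps to a uniformly chosen state in `{0, …, m-1}` (state `0` is absorbing). -/
noncomputable def chainR {Ω : Type*} (n : ℕ) (U : ℕ → Ω → ℝ) : ℕ → Ω → ℕ
  | 0 => fun _ => n
  | (t + 1) => fun ω => ⌊(chainR n U t ω : ℝ) * U (t + 1) ω⌋₊

/-- `hitZ n U` is the hitting time of `0` for the chain `chainR n U`. -/
noncomputable def hitZ {Ω : Type*} (n : ℕ) (U : ℕ → Ω → ℝ) (ω : Ω) : ℕ :=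
  sInf {t | chainR n U t ω = 0}

/-- `sumZ n k U ω = Z₁ + ⋯ + Z_k`, a sum of `k` i.i.d. copies of `Z(n)`, where the `i`-th copy
is driven by the `i`-th row of the doubly-indexed i.i.d. uniform family `U`. -/
noncomputable def sumZ {Ω : Type*} (n k : ℕ) (U : ℕ × ℕ → Ω → ℝ) (ω : Ω) : ℕ :=
  ∑ i ∈ Finset.range k, hitZ n (fun t => U (i, t)) ω

namespace CDP

variable {Ω : Type*} {n : ℕ} {U : ℕ → Ω → ℝ} {ω : Ω}

lemma chain_le_prod (hu : ∀ t, 0 ≤ U t ω ∧ U t ω < 1) (t : ℕ) :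
    (chainR n U t ω : ℝ) ≤ n * ∏ s ∈ Finset.range t, U (s+1) ω := by
  induction t with
  | zero => simp [chainR]
  | succ t ih =>
    have h1 : (chainR n U (t+1) ω : ℝ) ≤ (chainR n U t ω : ℝ) * U (t+1) ω := by
      simpa [chainR] using Nat.floor_le (mul_nonneg (Nat.cast_nonneg _) (hu (t+1)).1)
    calc (chainR n U (t+1) ω : ℝ) ≤ (chainR n U t ω : ℝ) * U (t+1) ω := h1
      _ ≤ (n * ∏ s ∈ Finset.range t, U (s+1) ω) * U (t+1) ω :=
          mul_le_mul_of_nonneg_right ih (hu (t+1)).1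
      _ = n * ∏ s ∈ Finset.range (t+1), U (s+1) ω := by
          rw [Finset.prod_range_succ]; ring

lemma chain_absorb {t t' : ℕ} (h : chainR n U t ω = 0) (ht : t ≤ t') : chainR n U t' ω = 0 := by
  induction t' with
  | zero =>
    have : t = 0 := by omega
    exact this ▸ h
  | succ t' ih =>
    rcases Nat.lt_or_ge t (t'+1) with h1 | h1
    · have h2 := ih (by omega)
      simp [chainR, h2]
    · have : t = t' + 1 := by omega
      exact this ▸ h

lemma chain_decrease (hu : ∀ t, 0 ≤ U t ω ∧ U t ω < 1) {t : ℕ} (h : 0 < chainR n U t ω) :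
    chainR n U (t+1) ω < chainR n U t ω := by
  have h0 : (0:ℝ) ≤ (chainR n U t ω : ℝ) * U (t+1) ω :=
    mul_nonneg (Nat.cast_nonneg _) (hu (t+1)).1
  have hc : (0:ℝ) < (chainR n U t ω : ℝ) := by exact_mod_cast h
  have hlt : (chainR n U t ω : ℝ) * U (t+1) ω < chainR n U t ω := by
    nlinarith [(hu (t+1)).2]
  show ⌊(chainR n U t ω : ℝ) * U (t + 1) ω⌋₊ < chainR n U t ω
  exact (Nat.floor_lt h0).2 hlt

lemma chain_hits_zero (hu : ∀ t, 0 ≤ U t ω ∧ U t ω < 1) : chainR n U n ω = 0 := by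
  have key : ∀ t, chainR n U t ω = 0 ∨ chainR n U t ω + t ≤ n := by
    intro t
    induction t with
    | zero => right; simp [chainR]
    | succ t ih =>
      rcases ih with h | h
      · left; exact chain_absorb h (Nat.le_succ t)
      · rcases Nat.eq_zero_or_pos (chainR n U t ω) with h0 | h0
        · left; exact chain_absorb h0 (Nat.le_succ t)
        · right
          have := chain_decrease hu h0
          omega
  rcases key n with h | h
  · exact h
  · omega

lemma hitZ_le (hu : ∀ t, 0 ≤ U t ω ∧ U t ω < 1) : hitZ n U ω ≤ n :=
  Nat.sInf_le (show chainR n U n ω = 0 from chain_hits_zero hu)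

lemma chain_hitZ_eq_zero (hu : ∀ t, 0 ≤ U t ω ∧ U t ω < 1) : chainR n U (hitZ n U ω) ω = 0 :=
  Nat.sInf_mem (⟨n, show chainR n U n ω = 0 from chain_hits_zero hu⟩ :
    Set.Nonempty {t | chainR n U t ω = 0})

lemma hitZ_pos (hu : ∀ t, 0 ≤ U t ω ∧ U t ω < 1) (hn : 2 ≤ n) : 1 ≤ hitZ n U ω := by
  by_contra h
  have h0 : hitZ n U ω = 0 := by omega
  have h1 := chain_hitZ_eq_zero (n := n) hu
  rw [h0] at h1
  simp [chainR] at h1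
  omega

lemma lt_hitZ_iff (hu : ∀ t, 0 ≤ U t ω ∧ U t ω < 1) {t : ℕ} :
    t < hitZ n U ω ↔ chainR n U t ω ≠ 0 := by
  constructor
  · intro h hc
    exact absurd (show hitZ n U ω ≤ t from Nat.sInf_le (show chainR n U t ω = 0 from hc))
      (by omega)
  · intro h
    by_contra hle
    exact h (chain_absorb (chain_hitZ_eq_zero hu) (by omega))

lemma one_le_prod_of_lt_hitZ (hu : ∀ t, 0 ≤ U t ω ∧ U t ω < 1) {t : ℕ} (h : t < hitZ n U ω) :
    1 ≤ (n:ℝ) * ∏ s ∈ Finset.range t, U (s+1) ω := by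
  have h1 : chainR n U t ω ≠ 0 := (lt_hitZ_iff hu).1 h
  have h2 : (1:ℝ) ≤ chainR n U t ω := by exact_mod_cast Nat.one_le_iff_ne_zero.2 h1
  exact h2.trans (chain_le_prod hu t)

lemma lt_hitZ_of_prod (hu : ∀ t, 0 < U t ω ∧ U t ω < 1) {t : ℕ}
    (h : 1 ≤ (n:ℝ) * ∏ s ∈ Finset.range t, (U (s+1) ω / 2)) : t < hitZ n U ω := by
  have hu' : ∀ t, 0 ≤ U t ω ∧ U t ω < 1 := fun t => ⟨(hu t).1.le, (hu t).2⟩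
  -- products of u/2 are antitone in t
  have hanti : ∀ t', t' ≤ t →
      (1:ℝ) ≤ (n:ℝ) * ∏ s ∈ Finset.range t', (U (s+1) ω / 2) := by
    intro t' ht'
    refine le_trans h ?_
    have hsplit : (∏ s ∈ Finset.range t', (U (s+1) ω / 2)) *
        ∏ s ∈ Finset.Ico t' t, (U (s+1) ω / 2) = ∏ s ∈ Finset.range t, (U (s+1) ω / 2) :=
      Finset.prod_range_mul_prod_Ico _ ht'
    have h1 : (0:ℝ) ≤ ∏ s ∈ Finset.range t', (U (s+1) ω / 2) :=
      Finset.prod_nonneg fun i _ => by have := (hu (i+1)).1; linarith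
    have h2 : ∏ s ∈ Finset.Ico t' t, (U (s+1) ω / 2) ≤ 1 :=
      Finset.prod_le_one (fun i _ => by have := (hu (i+1)).1; linarith)
        (fun i _ => by have := (hu (i+1)).2; linarith)
    have h3 : (0:ℝ) ≤ ∏ s ∈ Finset.Ico t' t, (U (s+1) ω / 2) :=
      Finset.prod_nonneg fun i _ => by have := (hu (i+1)).1; linarith
    have hn0 : (0:ℝ) ≤ n := Nat.cast_nonneg _
    have h4 := mul_le_mul_of_nonneg_left h2 (mul_nonneg hn0 h1)
    rw [← hsplit]
    nlinarith [h4]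
  -- main induction: chain dominates the halved product
  have key : ∀ t', t' ≤ t →
      (n:ℝ) * ∏ s ∈ Finset.range t', (U (s+1) ω / 2) ≤ chainR n U t' ω := by
    intro t' ht'
    induction t' with
    | zero => simp [chainR]
    | succ t' ih =>
      have ih' := ih (by omega)
      have hQ : (1:ℝ) ≤ (n:ℝ) * ∏ s ∈ Finset.range (t'+1), (U (s+1) ω / 2) :=
        hanti (t'+1) ht'
      set Q := (n:ℝ) * ∏ s ∈ Finset.range (t'+1), (U (s+1) ω / 2) with hQdef
      have hprod : (n:ℝ) * (∏ s ∈ Finset.range t', (U (s+1) ω / 2)) * U (t'+1) ω = 2 * Q := by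
        rw [hQdef, Finset.prod_range_succ]; ring
      have h2Q : 2 * Q ≤ (chainR n U t' ω : ℝ) * U (t'+1) ω := by
        rw [← hprod]
        exact mul_le_mul_of_nonneg_right ih' (hu (t'+1)).1.le
      have hfloor : (chainR n U t' ω : ℝ) * U (t'+1) ω <
          (⌊(chainR n U t' ω : ℝ) * U (t'+1) ω⌋₊ : ℝ) + 1 :=
        Nat.lt_floor_add_one _
      have : Q ≤ (⌊(chainR n U t' ω : ℝ) * U (t'+1) ω⌋₊ : ℝ) := by linarith
      simpa [chainR] using this
  have h1 : (1:ℝ) ≤ chainR n U t ω := le_trans (hanti t le_rfl) (key t le_rfl)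
  rw [lt_hitZ_iff hu']
  intro hc
  rw [hc] at h1
  norm_num at h1

end CDP

namespace CDP

variable {Ω : Type} [MeasureSpace Ω] [IsProbabilityMeasure (ℙ : Measure Ω)]
  {U : ℕ × ℕ → Ω → ℝ}

/-- Product over a finset of distinct coordinates factorizes. -/
lemma core_lintegral_prod (hmeas : ∀ p, Measurable (U p))
    (hind : iIndepFun U ℙ)
    (φ : ℕ × ℕ → ℝ → ℝ≥0∞) (hφ : ∀ p, Measurable (φ p)) (F : Finset (ℕ × ℕ)) :
    ∫⁻ ω, ∏ p ∈ F, φ p (U p ω) ∂ℙ = ∏ p ∈ F, ∫⁻ ω, φ p (U p ω) ∂ℙ := by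
  classical
  induction F using Finset.induction_on with
  | empty => simp
  | @insert q F hq ih =>
    have hindc : iIndepFun (fun p => (φ p) ∘ (U p)) ℙ :=
      hind.comp (fun p => φ p) (fun p => hφ p)
    have hmeasc : ∀ p, Measurable ((φ p) ∘ (U p)) := fun p => (hφ p).comp (hmeas p)
    have hindep : IndepFun (∏ p ∈ F, (φ p) ∘ (U p)) ((φ q) ∘ (U q)) ℙ :=
      hindc.indepFun_finset_prod_of_notMem hmeasc hq
    rw [show (∏ p ∈ F, (φ p) ∘ (U p)) = (fun a => ∏ p ∈ F, ((φ p) ∘ (U p)) a) from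
      funext (fun a => Finset.prod_apply a F _)] at hindep
    have hmul := lintegral_mul_eq_lintegral_mul_lintegral_of_indepFun
      (Finset.measurable_prod F (fun p _ => hmeasc p)) (hmeasc q) hindep
    simp only [Finset.prod_insert hq]
    calc ∫⁻ ω, φ q (U q ω) * ∏ p ∈ F, φ p (U p ω) ∂ℙ
        = ∫⁻ ω, ((fun a => ∏ p ∈ F, ((φ p) ∘ (U p)) a) * ((φ q) ∘ (U q))) ω ∂ℙ := by
          apply lintegral_congr; intro ω
          simp [mul_comm]
      _ = (∫⁻ ω, ∏ p ∈ F, φ p (U p ω) ∂ℙ) * ∫⁻ ω, φ q (U q ω) ∂ℙ := hmul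
      _ = (∫⁻ ω, φ q (U q ω) ∂ℙ) * ∏ p ∈ F, ∫⁻ ω, φ p (U p ω) ∂ℙ := by
          rw [ih, mul_comm]

/-- The per-row functional used in the Chernoff bounds. -/
noncomputable def rowFun (U : ℕ × ℕ → Ω → ℝ) (L : ℕ) (c : ℕ → ℝ≥0∞) (τ : ℕ → ℕ)
    (φ : ℝ → ℝ≥0∞) (i : ℕ) (ω : Ω) : ℝ≥0∞ :=
  ∑ t ∈ Finset.range L, c t * ∏ s ∈ Finset.range (τ t), φ (U (i, s+1) ω)

lemma rowFun_measurable (hmeas : ∀ p, Measurable (U p)) {L c τ} {φ : ℝ → ℝ≥0∞}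
    (hφ : Measurable φ) (i : ℕ) : Measurable (rowFun U L c τ φ i) := by
  apply Finset.measurable_sum
  intro t _
  exact (Finset.measurable_prod _ (fun s _ => hφ.comp (hmeas (i, s+1)))).const_mul _

lemma rowFun_indep (hmeas : ∀ p, Measurable (U p))
    (hind : iIndepFun U ℙ) {L c τ} {φ : ℝ → ℝ≥0∞}
    (hφ : Measurable φ) (k : ℕ) :
    IndepFun (fun ω => ∏ i ∈ Finset.range k, rowFun U L c τ φ i ω)
      (rowFun U L c τ φ k) ℙ := by
  classical
  set M : ℕ := (Finset.range L).sup τ + 2 with hM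
  set S : Finset (ℕ × ℕ) := Finset.range k ×ˢ Finset.range M with hS
  set T : Finset (ℕ × ℕ) := {k} ×ˢ Finset.range M with hT
  have hST : Disjoint S T := by
    rw [Finset.disjoint_left]
    rintro ⟨a, b⟩ haS haT
    rw [hS, Finset.mem_product, Finset.mem_range] at haS
    rw [hT, Finset.mem_product, Finset.mem_singleton] at haT
    omega
  have hbase := iIndepFun.indepFun_finset S T hST hind hmeas
  -- build the composing functions
  let ext : ∀ (G : Finset (ℕ × ℕ)), (↥G → ℝ) → ℕ × ℕ → ℝ :=
    fun G x p => if h : p ∈ G then x ⟨p, h⟩ else 0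
  have hext_meas : ∀ (G : Finset (ℕ × ℕ)) (p : ℕ × ℕ),
      Measurable (fun x : ↥G → ℝ => ext G x p) := by
    intro G p
    by_cases h : p ∈ G
    · simpa [ext, h] using measurable_pi_apply (⟨p, h⟩ : ↥G)
    · simpa [ext, h] using measurable_const
  let g₁ : (↥S → ℝ) → ℝ≥0∞ := fun x =>
    ∏ i ∈ Finset.range k, ∑ t ∈ Finset.range L, c t *
      ∏ s ∈ Finset.range (τ t), φ (ext S x (i, s+1))
  let g₂ : (↥T → ℝ) → ℝ≥0∞ := fun x =>
    ∑ t ∈ Finset.range L, c t * ∏ s ∈ Finset.range (τ t), φ (ext T x (k, s+1))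
  have hg₁ : Measurable g₁ := by
    apply Finset.measurable_prod
    intro i _
    apply Finset.measurable_sum
    intro t _
    exact (Finset.measurable_prod _ (fun s _ => hφ.comp (hext_meas S (i, s+1)))).const_mul _
  have hg₂ : Measurable g₂ := by
    apply Finset.measurable_sum
    intro t _
    exact (Finset.measurable_prod _ (fun s _ => hφ.comp (hext_meas T (k, s+1)))).const_mul _
  have hcomp := hbase.comp hg₁ hg₂
  have hmem : ∀ t ∈ Finset.range L, ∀ s ∈ Finset.range (τ t), s + 1 < M := by
    intro t ht s hs
    have : τ t ≤ (Finset.range L).sup τ := Finset.le_sup ht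
    have := Finset.mem_range.1 hs
    omega
  have e₁ : (g₁ ∘ fun ω (p : ↥S) => U p ω)
      = fun ω => ∏ i ∈ Finset.range k, rowFun U L c τ φ i ω := by
    funext ω
    simp only [Function.comp, g₁, rowFun]
    apply Finset.prod_congr rfl
    intro i hi
    apply Finset.sum_congr rfl
    intro t ht
    congr 1
    apply Finset.prod_congr rfl
    intro s hs
    have hmemS : ((i, s+1) : ℕ × ℕ) ∈ S :=
      Finset.mem_product.2 ⟨hi, Finset.mem_range.2 (hmem t ht s hs)⟩
    simp [ext, hmemS]
  have e₂ : (g₂ ∘ fun ω (p : ↥T) => U p ω) = rowFun U L c τ φ k := by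
    funext ω
    simp only [Function.comp, g₂, rowFun]
    apply Finset.sum_congr rfl
    intro t ht
    congr 1
    apply Finset.prod_congr rfl
    intro s hs
    have hmemT : ((k, s+1) : ℕ × ℕ) ∈ T :=
      Finset.mem_product.2 ⟨Finset.mem_singleton_self k, Finset.mem_range.2 (hmem t ht s hs)⟩
    simp [ext, hmemT]
  rw [e₁, e₂] at hcomp
  exact hcomp

/-- Main factorization: `∫⁻ ∏ rows = (∑ t, c t * m ^ τ t) ^ k` when all coordinates have
`∫⁻ φ ∘ U p = m`. -/
lemma gen_lintegral (hmeas : ∀ p, Measurable (U p))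
    (hind : iIndepFun U ℙ)
    {L : ℕ} {c : ℕ → ℝ≥0∞} {τ : ℕ → ℕ} {φ : ℝ → ℝ≥0∞} (hφ : Measurable φ)
    {m : ℝ≥0∞} (hm : ∀ p : ℕ × ℕ, ∫⁻ ω, φ (U p ω) ∂ℙ = m) (k : ℕ) :
    ∫⁻ ω, ∏ i ∈ Finset.range k, rowFun U L c τ φ i ω ∂ℙ
      = (∑ t ∈ Finset.range L, c t * m ^ (τ t)) ^ k := by
  have hmeasrow : ∀ i, Measurable (rowFun U L c τ φ i) := rowFun_measurable hmeas hφ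
  have hmp : ∀ i s, Measurable (fun ω => φ (U (i, s+1) ω)) :=
    fun i s => hφ.comp (hmeas (i, s+1))
  have hmp2 : ∀ i t, Measurable (fun ω => ∏ s ∈ Finset.range (τ t), φ (U (i, s+1) ω)) :=
    fun i t => Finset.measurable_prod _ (fun s _ => hmp i s)
  have hrow : ∀ i, ∫⁻ ω, rowFun U L c τ φ i ω ∂ℙ
      = ∑ t ∈ Finset.range L, c t * m ^ (τ t) := by
    intro i
    have h1 : ∫⁻ ω, rowFun U L c τ φ i ω ∂ℙ
        = ∑ t ∈ Finset.range L, ∫⁻ ω, c t * ∏ s ∈ Finset.range (τ t), φ (U (i, s+1) ω) ∂ℙ := by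
      rw [show (fun ω => rowFun U L c τ φ i ω) = (fun ω => ∑ t ∈ Finset.range L,
          c t * ∏ s ∈ Finset.range (τ t), φ (U (i, s+1) ω)) from rfl]
      exact lintegral_finset_sum _ (fun t _ => ((hmp2 i t).const_mul _))
    rw [h1]
    apply Finset.sum_congr rfl
    intro t _
    rw [lintegral_const_mul _ (hmp2 i t)]
    congr 1
    have hinj : Set.InjOn (fun s => ((i, s+1) : ℕ × ℕ)) (Finset.range (τ t)) := by
      intro a _ b _ hab
      simpa using hab
    have hconv : ∀ ω, ∏ s ∈ Finset.range (τ t), φ (U (i, s+1) ω)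
        = ∏ p ∈ (Finset.range (τ t)).image (fun s => ((i, s+1) : ℕ × ℕ)), φ (U p ω) := by
      intro ω
      rw [Finset.prod_image (fun a ha b hb hab => hinj ha hb hab)]
    calc ∫⁻ ω, ∏ s ∈ Finset.range (τ t), φ (U (i, s+1) ω) ∂ℙ
        = ∫⁻ ω, ∏ p ∈ (Finset.range (τ t)).image (fun s => ((i, s+1) : ℕ × ℕ)), φ (U p ω) ∂ℙ := by
          apply lintegral_congr; intro ω; exact hconv ω
      _ = ∏ p ∈ (Finset.range (τ t)).image (fun s => ((i, s+1) : ℕ × ℕ)), ∫⁻ ω, φ (U p ω) ∂ℙ :=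
          core_lintegral_prod hmeas hind (fun _ => φ) (fun _ => hφ) _
      _ = ∏ p ∈ (Finset.range (τ t)).image (fun s => ((i, s+1) : ℕ × ℕ)), m := by
          apply Finset.prod_congr rfl; intro p _; exact hm p
      _ = m ^ (τ t) := by
          rw [Finset.prod_const, Finset.card_image_of_injOn hinj, Finset.card_range]
  induction k with
  | zero => simp
  | succ k ih =>
    have hindep := rowFun_indep (c := c) (τ := τ) (L := L) hmeas hind hφ k
    have hmul := lintegral_mul_eq_lintegral_mul_lintegral_of_indepFun
      (Finset.measurable_prod _ (fun i _ => hmeasrow i)) (hmeasrow k) hindep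
    calc ∫⁻ ω, ∏ i ∈ Finset.range (k+1), rowFun U L c τ φ i ω ∂ℙ
        = ∫⁻ ω, ((fun ω => ∏ i ∈ Finset.range k, rowFun U L c τ φ i ω)
            * rowFun U L c τ φ k) ω ∂ℙ := by
          apply lintegral_congr; intro ω; simp [Finset.prod_range_succ]
      _ = (∫⁻ ω, ∏ i ∈ Finset.range k, rowFun U L c τ φ i ω ∂ℙ)
            * ∫⁻ ω, rowFun U L c τ φ k ω ∂ℙ := hmul
      _ = (∑ t ∈ Finset.range L, c t * m ^ (τ t)) ^ (k+1) := by
          rw [ih, hrow, pow_succ]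

end CDP

namespace CDP

variable {Ω : Type} [MeasureSpace Ω] [IsProbabilityMeasure (ℙ : Measure Ω)]
  {V : Ω → ℝ}

lemma lint_comp (hmeas : Measurable V) (hdist : Measure.map V ℙ = volume.restrict (Icc 0 1))
    {f : ℝ → ℝ≥0∞} (hf : Measurable f) :
    ∫⁻ ω, f (V ω) ∂ℙ = ∫⁻ x in Icc (0:ℝ) 1, f x := by
  rw [← hdist, lintegral_map hf hmeas]

lemma marg_sqrt (hmeas : Measurable V) (hdist : Measure.map V ℙ = volume.restrict (Icc 0 1)) :
    ∫⁻ ω, ENNReal.ofReal (Real.sqrt (2 * V ω)) ∂ℙ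
      = ENNReal.ofReal (2 * Real.sqrt 2 / 3) := by
  rw [lint_comp (f := fun x => ENNReal.ofReal (Real.sqrt (2*x))) hmeas hdist (by fun_prop)]
  have hcont : Continuous (fun x : ℝ => Real.sqrt (2 * x)) := by fun_prop
  rw [← ofReal_integral_eq_lintegral_ofReal (hcont.integrableOn_Icc)
    (Filter.Eventually.of_forall fun x => Real.sqrt_nonneg _)]
  congr 1
  rw [integral_Icc_eq_integral_Ioc, ← intervalIntegral.integral_of_le zero_le_one]
  have : ∀ x ∈ uIcc (0:ℝ) 1, Real.sqrt (2 * x) = Real.sqrt 2 * x ^ ((1:ℝ)/2) := by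
    intro x hx
    simp [Real.sqrt_mul (by norm_num : (0:ℝ) ≤ 2), Real.sqrt_eq_rpow]
  rw [intervalIntegral.integral_congr this, intervalIntegral.integral_const_mul,
    integral_rpow (Or.inl (by norm_num))]
  norm_num
  ring

lemma marg_rpow (hmeas : Measurable V) (hdist : Measure.map V ℙ = volume.restrict (Icc 0 1)) :
    ∫⁻ ω, (ENNReal.ofReal (V ω)) ^ (-(1/2) : ℝ) ∂ℙ = 2 := by
  rw [lint_comp (f := fun x => (ENNReal.ofReal x) ^ (-(1/2) : ℝ)) hmeas hdist (by fun_prop)]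
  rw [show (volume : Measure ℝ).restrict (Icc 0 1) = volume.restrict (Ioc 0 1) from
    (Measure.restrict_congr_set Ioc_ae_eq_Icc).symm]
  have h1 : ∫⁻ x in Ioc (0:ℝ) 1, (ENNReal.ofReal x) ^ (-(1/2) : ℝ)
      = ∫⁻ x in Ioc (0:ℝ) 1, ENNReal.ofReal (x ^ (-(1/2) : ℝ)) := by
    apply setLIntegral_congr_fun measurableSet_Ioc
    intro x hx
    exact ENNReal.ofReal_rpow_of_pos hx.1
  rw [h1]
  have hint : IntegrableOn (fun x : ℝ => x ^ (-(1/2) : ℝ)) (Ioc 0 1) := by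
    have := intervalIntegral.intervalIntegrable_rpow' (a := 0) (b := 1)
      (by norm_num : (-1:ℝ) < -(1/2))
    rwa [intervalIntegrable_iff_integrableOn_Ioc_of_le zero_le_one] at this
  rw [← ofReal_integral_eq_lintegral_ofReal hint]
  · rw [← intervalIntegral.integral_of_le zero_le_one,
      integral_rpow (Or.inl (by norm_num : (-1:ℝ) < -(1/2)))]
    norm_num
  · filter_upwards [self_mem_ae_restrict measurableSet_Ioc] with x hx
    exact Real.rpow_nonneg hx.1.le _

end CDP

namespace CDP
open Real

variable {Ω : Type} [MeasureSpace Ω] {U : ℕ × ℕ → Ω → ℝ}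

/-- components for the lower-tail Chernoff bound -/
noncomputable def φlow : ℝ → ℝ≥0∞ := fun x => (ENNReal.ofReal x) ^ (-(1/2) : ℝ)

noncomputable def clow (n t₀ : ℕ) : ℕ → ℝ≥0∞ := fun t =>
  if t = 0 then ENNReal.ofReal (Real.exp (-(t₀:ℝ)))
  else ENNReal.ofReal ((n:ℝ) ^ (-(1/2):ℝ) * 2 ^ ((t₀:ℝ)/2))

def τlow (t₀ : ℕ) : ℕ → ℕ := fun t => if t = 0 then 0 else t₀

/-- components for the upper-tail Chernoff bound -/
noncomputable def φup : ℝ → ℝ≥0∞ := fun x => ENNReal.ofReal (Real.sqrt (2 * x))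

noncomputable def cup (n : ℕ) : ℕ → ℝ≥0∞ := fun _ => ENNReal.ofReal (Real.sqrt (2 * n))

lemma φlow_meas : Measurable φlow := by
  unfold φlow; fun_prop

lemma φup_meas : Measurable φup := by
  unfold φup; fun_prop

lemma row_low {n : ℕ} (hn : 2 ≤ n) {i : ℕ} {ω : Ω}
    (hu : ∀ t, U (i, t) ω ∈ Set.Ioo (0:ℝ) 1) (t₀ : ℕ) :
    ENNReal.ofReal (Real.exp (-(hitZ n (fun t => U (i,t)) ω : ℝ)))
      ≤ rowFun U 2 (clow n t₀) (τlow t₀) φlow i ω := by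
  have hu' : ∀ t, 0 ≤ U (i,t) ω ∧ U (i,t) ω < 1 := fun t => ⟨(hu t).1.le, (hu t).2⟩
  have hu'' : ∀ t, 0 < U (i,t) ω ∧ U (i,t) ω < 1 := fun t => ⟨(hu t).1, (hu t).2⟩
  set Z := hitZ n (fun t => U (i,t)) ω with hZ
  have hrow : rowFun U 2 (clow n t₀) (τlow t₀) φlow i ω
      = ENNReal.ofReal (Real.exp (-(t₀:ℝ)))
        + ENNReal.ofReal ((n:ℝ) ^ (-(1/2):ℝ) * 2 ^ ((t₀:ℝ)/2))
          * ∏ s ∈ Finset.range t₀, φlow (U (i, s+1) ω) := by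
    simp [rowFun, Finset.sum_range_succ, clow, τlow]
  rw [hrow]
  by_cases hcase : t₀ < Z
  · have h1 : Real.exp (-(Z:ℝ)) ≤ Real.exp (-(t₀:ℝ)) := by
      apply Real.exp_le_exp.2
      simp only [neg_le_neg_iff]
      exact_mod_cast hcase.le
    exact le_add_right (ENNReal.ofReal_le_ofReal h1)
  · -- Z ≤ t₀ : the chain died early, so the product of (u/2) dipped below 1/n
    have hlt : (n:ℝ) * ∏ s ∈ Finset.range t₀, (U (i, s+1) ω / 2) < 1 := by
      by_contra hge
      exact hcase (lt_hitZ_of_prod hu'' (le_of_not_gt hge))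
    set P : ℝ := ∏ s ∈ Finset.range t₀, U (i, s+1) ω with hP
    have hP0 : 0 < P := Finset.prod_pos (fun s _ => (hu (s+1)).1)
    have hprodP : ∏ s ∈ Finset.range t₀, (U (i, s+1) ω / 2) = P / 2 ^ t₀ := by
      rw [hP, Finset.prod_div_distrib, Finset.prod_const, Finset.card_range]
    -- real inequality
    set Q : ℝ := (n:ℝ) * P / 2 ^ t₀ with hQ
    have hQ0 : 0 < Q := by positivity
    have hQ1 : Q ≤ 1 := by
      rw [hprodP] at hlt
      have he : (n:ℝ) * P / 2 ^ t₀ = n * (P / 2 ^ t₀) := by ring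
      rw [hQ, he]
      linarith
    have h1 : (1:ℝ) ≤ Q ^ (-(1/2):ℝ) :=
      Real.one_le_rpow_of_pos_of_le_one_of_nonpos hQ0 hQ1 (by norm_num)
    have e3 : ((2:ℝ) ^ (t₀:ℕ)) ^ ((1/2):ℝ) = 2 ^ ((t₀:ℝ)/2) := by
      rw [← Real.rpow_natCast 2 t₀, ← Real.rpow_mul (by norm_num : (0:ℝ) ≤ 2)]
      norm_num
      rw [mul_one_div]
    have hQr : Q ^ (-(1/2):ℝ) = (n:ℝ) ^ (-(1/2):ℝ) * 2 ^ ((t₀:ℝ)/2) * P ^ (-(1/2):ℝ) := by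
      rw [hQ, div_eq_mul_inv, ← Real.rpow_natCast 2 t₀, ← Real.rpow_neg (by norm_num : (0:ℝ) ≤ 2)]
      rw [Real.mul_rpow (by positivity) (by positivity),
        Real.mul_rpow (by positivity) (by positivity),
        ← Real.rpow_mul (by norm_num : (0:ℝ) ≤ 2)]
      rw [← e3, ← Real.rpow_natCast 2 t₀, ← Real.rpow_mul (by norm_num : (0:ℝ) ≤ 2)]
      ring_nf
    have hkey : (1:ℝ) ≤ (n:ℝ) ^ (-(1/2):ℝ) * 2 ^ ((t₀:ℝ)/2) * P ^ (-(1/2):ℝ) := hQr ▸ h1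
    -- move to ℝ≥0∞
    have hfac : ∏ s ∈ Finset.range t₀, φlow (U (i, s+1) ω)
        = ENNReal.ofReal (∏ s ∈ Finset.range t₀, (U (i, s+1) ω) ^ (-(1/2):ℝ)) := by
      rw [ENNReal.ofReal_prod_of_nonneg (fun s _ => Real.rpow_nonneg (hu (s+1)).1.le _)]
      apply Finset.prod_congr rfl
      intro s _
      rw [φlow, ENNReal.ofReal_rpow_of_pos (hu (s+1)).1]
    have hprodr : ∏ s ∈ Finset.range t₀, (U (i, s+1) ω) ^ (-(1/2):ℝ) = P ^ (-(1/2):ℝ) :=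
      Real.finset_prod_rpow _ _ (fun s _ => (hu (s+1)).1.le) _
    have h2 : (1:ℝ≥0∞) ≤ ENNReal.ofReal ((n:ℝ) ^ (-(1/2):ℝ) * 2 ^ ((t₀:ℝ)/2))
        * ∏ s ∈ Finset.range t₀, φlow (U (i, s+1) ω) := by
      rw [hfac, hprodr, ← ENNReal.ofReal_mul (by positivity)]
      exact ENNReal.one_le_ofReal.2 hkey
    have h3 : ENNReal.ofReal (Real.exp (-(Z:ℝ))) ≤ 1 := by
      rw [show (1:ℝ≥0∞) = ENNReal.ofReal 1 by simp]
      apply ENNReal.ofReal_le_ofReal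
      rw [Real.exp_le_one_iff]
      simp
    exact le_add_left (h3.trans h2)

lemma row_up {n : ℕ} (hn : 2 ≤ n) {i : ℕ} {ω : Ω}
    (hu : ∀ t, U (i, t) ω ∈ Set.Ioo (0:ℝ) 1) :
    ENNReal.ofReal ((2:ℝ) ^ (((hitZ n (fun t => U (i,t)) ω : ℕ) : ℝ)/2))
      ≤ rowFun U n (cup n) id φup i ω := by
  have hu' : ∀ t, 0 ≤ U (i,t) ω ∧ U (i,t) ω < 1 := fun t => ⟨(hu t).1.le, (hu t).2⟩
  set Z := hitZ n (fun t => U (i,t)) ω with hZdef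
  have hZ1 : 1 ≤ Z := hitZ_pos hu' hn
  have hZn : Z ≤ n := hitZ_le hu'
  set t : ℕ := Z - 1 with ht
  have htZ : t < Z := by omega
  have htn : t ∈ Finset.range n := Finset.mem_range.2 (by omega)
  set P : ℝ := ∏ s ∈ Finset.range t, U (i, s+1) ω with hP
  have hP0 : 0 < P := Finset.prod_pos (fun s _ => (hu (s+1)).1)
  have h1 : (1:ℝ) ≤ (n:ℝ) * P := one_le_prod_of_lt_hitZ hu' htZ
  -- single term bound
  have hterm : ENNReal.ofReal ((2:ℝ) ^ ((Z:ℝ)/2))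
      ≤ cup n t * ∏ s ∈ Finset.range t, φup (U (i, s+1) ω) := by
    have hfac : ∏ s ∈ Finset.range t, φup (U (i, s+1) ω)
        = ENNReal.ofReal (∏ s ∈ Finset.range t, Real.sqrt (2 * U (i, s+1) ω)) := by
      rw [ENNReal.ofReal_prod_of_nonneg (fun s _ => Real.sqrt_nonneg _)]
      rfl
    rw [hfac, cup, ← ENNReal.ofReal_mul (Real.sqrt_nonneg _)]
    apply ENNReal.ofReal_le_ofReal
    -- real inequality
    have hsq : ∏ s ∈ Finset.range t, Real.sqrt (2 * U (i, s+1) ω)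
        = ((2:ℝ)^t * P) ^ ((1/2):ℝ) := by
      have : ∀ s ∈ Finset.range t, Real.sqrt (2 * U (i, s+1) ω)
          = (2 * U (i, s+1) ω) ^ ((1/2):ℝ) := by
        intro s _
        rw [Real.sqrt_eq_rpow]
      rw [Finset.prod_congr rfl this,
        Real.finset_prod_rpow _ _ (fun s _ => by have := (hu (s+1)).1; linarith) _,
        Finset.prod_mul_distrib, Finset.prod_const, Finset.card_range]
    rw [hsq, Real.sqrt_eq_rpow,
      ← Real.mul_rpow (by positivity) (mul_nonneg (by positivity) hP0.le)]
    have hbase : (2:ℝ) ^ ((Z:ℝ)/2) = ((2:ℝ) ^ (Z:ℕ)) ^ ((1/2):ℝ) := by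
      rw [← Real.rpow_natCast 2 Z, ← Real.rpow_mul (by norm_num : (0:ℝ) ≤ 2), mul_one_div]
    rw [hbase]
    apply Real.rpow_le_rpow (by positivity) _ (by norm_num)
    have hZt : (2:ℝ) ^ (Z:ℕ) = 2 * 2 ^ t := by
      rw [show Z = t + 1 by omega, pow_succ]; ring
    have h2t : (0:ℝ) < 2 ^ t := by positivity
    rw [hZt]
    nlinarith
  calc ENNReal.ofReal ((2:ℝ) ^ ((Z:ℝ)/2))
      ≤ cup n t * ∏ s ∈ Finset.range t, φup (U (i, s+1) ω) := hterm
    _ ≤ ∑ t' ∈ Finset.range n, cup n t' * ∏ s ∈ Finset.range (id t'), φup (U (i, s+1) ω) :=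
        Finset.single_le_sum (f := fun t' => cup n t' *
          ∏ s ∈ Finset.range (id t'), φup (U (i, s+1) ω)) (fun t' _ => zero_le) htn
    _ = rowFun U n (cup n) id φup i ω := rfl

end CDP

namespace CDP
open Real

lemma sqrt_two_le : Real.sqrt 2 ≤ 99/70 := by
  rw [show (99/70 : ℝ) = Real.sqrt ((99/70)^2) from (Real.sqrt_sq (by norm_num)).symm]
  apply Real.sqrt_le_sqrt
  norm_num

lemma exp_five_ge : (2:ℝ) ≤ Real.exp 5 := by
  have := Real.add_one_le_exp (5:ℝ)
  linarith

lemma geom18 (n : ℕ) : ∑ t ∈ Finset.range n, (2 * Real.sqrt 2 / 3) ^ t ≤ 18 := by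
  set r : ℝ := 2 * Real.sqrt 2 / 3 with hr
  have h2 : Real.sqrt 2 ≤ 99/70 := sqrt_two_le
  have h0 : (0:ℝ) ≤ Real.sqrt 2 := Real.sqrt_nonneg _
  have hr0 : 0 ≤ r := by rw [hr]; positivity
  have hr1 : r < 1 := by rw [hr]; nlinarith
  have hrn : (0:ℝ) ≤ r ^ n := pow_nonneg hr0 n
  have hgs := geom_sum_eq hr1.ne n
  rw [hgs]
  have h1r : 0 < 1 - r := by linarith
  have heq : (r^n - 1)/(r - 1) = (1 - r^n)/(1 - r) := by
    rw [← neg_div_neg_eq]; ring_nf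
  rw [heq, div_le_iff₀ h1r]
  nlinarith

lemma num1 {n : ℕ} (hn : 2 ≤ n) (hln : 40 < Real.log n) :
    Real.exp (-(⌊Real.log n / 5⌋₊:ℝ))
      + (n:ℝ) ^ (-(1/2):ℝ) * 2 ^ ((⌊Real.log n / 5⌋₊:ℝ)/2) * 2 ^ (⌊Real.log n / 5⌋₊:ℕ)
      ≤ (n:ℝ) ^ (-(1/20):ℝ) := by
  have hnpos : (0:ℝ) < n := by positivity
  set l : ℝ := Real.log n with hl
  set t₀ : ℕ := ⌊l / 5⌋₊ with ht₀
  have hfl1 : (t₀:ℝ) ≤ l / 5 := Nat.floor_le (by linarith)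
  have hfl2 : l / 5 - 1 ≤ (t₀:ℝ) := by
    have := Nat.lt_floor_add_one (l / 5)
    linarith
  have hlog2u : Real.log 2 < 0.6931471808 := Real.log_two_lt_d9
  have hlog2l : (0:ℝ) < Real.log 2 := Real.log_pos (by norm_num)
  -- rewrite everything as exponentials
  have e1 : (n:ℝ) ^ (-(1/2):ℝ) = Real.exp (l * (-(1/2))) := by
    rw [Real.rpow_def_of_pos hnpos]
  have e2 : (2:ℝ) ^ ((t₀:ℝ)/2) = Real.exp (Real.log 2 * ((t₀:ℝ)/2)) := by
    rw [Real.rpow_def_of_pos (by norm_num)]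
  have e3 : (2:ℝ) ^ (t₀:ℕ) = Real.exp (Real.log 2 * (t₀:ℝ)) := by
    rw [← Real.rpow_natCast 2 t₀, Real.rpow_def_of_pos (by norm_num)]
  have e4 : (n:ℝ) ^ (-(1/20):ℝ) = Real.exp (l * (-(1/20))) := by
    rw [Real.rpow_def_of_pos hnpos]
  rw [e1, e2, e3, e4, ← Real.exp_add, ← Real.exp_add]
  have hexp5 : Real.exp (-5) ≤ 1/2 := by
    rw [Real.exp_neg]
    rw [inv_le_comm₀ (Real.exp_pos _) (by norm_num)]
    calc (1/2 : ℝ)⁻¹ = 2 := by norm_num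
      _ ≤ Real.exp 5 := exp_five_ge
  have key : ∀ x : ℝ, x ≤ l * (-(1/20)) - 5 → Real.exp x ≤ 1/2 * Real.exp (l * (-(1/20))) := by
    intro x hx
    calc Real.exp x ≤ Real.exp (l * (-(1/20)) - 5) := Real.exp_le_exp.2 hx
      _ = Real.exp (-5) * Real.exp (l * (-(1/20))) := by
          rw [← Real.exp_add]; ring_nf
      _ ≤ 1/2 * Real.exp (l * (-(1/20))) :=
          mul_le_mul_of_nonneg_right hexp5 (Real.exp_nonneg _)
  have b1 : Real.exp (-(t₀:ℝ)) ≤ 1/2 * Real.exp (l * (-(1/20))) := by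
    apply key; nlinarith
  have b2 : Real.exp (l * (-(1/2)) + Real.log 2 * ((t₀:ℝ)/2) + Real.log 2 * (t₀:ℝ))
      ≤ 1/2 * Real.exp (l * (-(1/20))) := by
    apply key; nlinarith
  linarith

lemma num2 {n : ℕ} (hn : 2 ≤ n) :
    Real.sqrt (2*n) * 18 ≤ (n:ℝ) ^ ((17/2)*Real.log 2 - 1/20 : ℝ) := by
  have hnpos : (0:ℝ) < n := by positivity
  have hn1 : (1:ℝ) ≤ n := by exact_mod_cast Nat.one_le_of_lt hn
  have hn2 : (2:ℝ) ≤ n := by exact_mod_cast hn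
  have hlog2l : (0.6931471803:ℝ) < Real.log 2 := Real.log_two_gt_d9
  have hsq : Real.sqrt (2*n) ≤ (3/2) * (n:ℝ) ^ ((1/2):ℝ) := by
    rw [Real.sqrt_mul (by norm_num : (0:ℝ) ≤ 2)]
    have h1 : Real.sqrt (n:ℝ) = (n:ℝ) ^ ((1/2):ℝ) := Real.sqrt_eq_rpow _
    rw [h1]
    have : Real.sqrt 2 ≤ 3/2 := sqrt_two_le.trans (by norm_num)
    nlinarith [Real.rpow_nonneg hnpos.le ((1/2):ℝ)]
  have h27 : (27:ℝ) ≤ (n:ℝ) ^ (5:ℕ) := by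
    calc (27:ℝ) ≤ 32 := by norm_num
      _ = 2 ^ (5:ℕ) := by norm_num
      _ ≤ (n:ℝ) ^ (5:ℕ) := by gcongr
  calc Real.sqrt (2*n) * 18 ≤ ((3/2) * (n:ℝ) ^ ((1/2):ℝ)) * 18 := by
        apply mul_le_mul_of_nonneg_right hsq (by norm_num)
    _ = 27 * (n:ℝ) ^ ((1/2):ℝ) := by ring
    _ ≤ (n:ℝ) ^ (5:ℕ) * (n:ℝ) ^ ((1/2):ℝ) := by
        apply mul_le_mul_of_nonneg_right h27 (Real.rpow_nonneg hnpos.le _)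
    _ = (n:ℝ) ^ ((5:ℝ) + (1/2):ℝ) := by
        rw [Real.rpow_add hnpos]
        congr 1
        rw [← Real.rpow_natCast ((n:ℝ)) 5]
        norm_num
    _ ≤ (n:ℝ) ^ ((17/2)*Real.log 2 - 1/20 : ℝ) := by
        apply Real.rpow_le_rpow_of_exponent_le hn1
        nlinarith

end CDP

namespace CDP
open Real

variable {Ω : Type} [MeasureSpace Ω] [IsProbabilityMeasure (ℙ : Measure Ω)]
  {U : ℕ × ℕ → Ω → ℝ}

def Gset (U : ℕ × ℕ → Ω → ℝ) : Set Ω := {ω | ∀ p : ℕ × ℕ, U p ω ∈ Set.Ioo (0:ℝ) 1}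

lemma Gset_compl_null (hmeas : ∀ p, Measurable (U p))
    (hdist : ∀ p, Measure.map (U p) ℙ = (volume : Measure ℝ).restrict (Set.Icc 0 1)) :
    ℙ (Gset U)ᶜ = 0 := by
  have h1 : ∀ p : ℕ × ℕ, ℙ (U p ⁻¹' (Set.Ioo (0:ℝ) 1)ᶜ) = 0 := by
    intro p
    rw [← Measure.map_apply (hmeas p) measurableSet_Ioo.compl, hdist p,
      Measure.restrict_apply measurableSet_Ioo.compl]
    apply measure_mono_null (show (Set.Ioo (0:ℝ) 1)ᶜ ∩ Set.Icc 0 1 ⊆ {0, 1} from ?_)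
    · exact measure_union_null (measure_singleton 0) (measure_singleton 1)
    · rintro x ⟨hx1, hx2⟩
      simp only [Set.mem_compl_iff, Set.mem_Ioo, not_and, not_lt] at hx1
      rcases hx2 with ⟨h0, h1'⟩
      rcases eq_or_lt_of_le h0 with h | h
      · left; exact h.symm
      · right; exact le_antisymm h1' (hx1 h)
  apply measure_mono_null _ (measure_iUnion_null h1)
  intro ω hω
  simp only [Gset, Set.mem_compl_iff, Set.mem_setOf_eq, not_forall] at hω
  obtain ⟨p, hp⟩ := hω
  exact Set.mem_iUnion.2 ⟨p, hp⟩

lemma sumZ_ge_k {n k : ℕ} (hn : 2 ≤ n) {ω : Ω} (hG : ω ∈ Gset U) :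
    (k:ℝ) ≤ (sumZ n k U ω : ℝ) := by
  have h1 : k ≤ sumZ n k U ω := by
    have h2 : ∑ i ∈ Finset.range k, 1 ≤ ∑ i ∈ Finset.range k, hitZ n (fun t => U (i,t)) ω :=
      Finset.sum_le_sum (fun i _ => hitZ_pos (fun t => ⟨(hG (i,t)).1.le, (hG (i,t)).2⟩) hn)
    simpa [sumZ] using h2
  exact_mod_cast h1

lemma sumZ_cast {n k : ℕ} (ω : Ω) :
    ((sumZ n k U ω : ℕ) : ℝ) = ∑ i ∈ Finset.range k, (hitZ n (fun t => U (i,t)) ω : ℝ) := by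
  rw [sumZ]; push_cast; rfl

lemma low_num {n k : ℕ} (hn : 2 ≤ n) (hk : 1 ≤ k) (hln : 40 < Real.log n) :
    (Real.exp (-(⌊Real.log n / 5⌋₊:ℝ))
        + (n:ℝ) ^ (-(1/2):ℝ) * 2 ^ ((⌊Real.log n / 5⌋₊:ℝ)/2) * 2 ^ (⌊Real.log n / 5⌋₊:ℕ)) ^ k
      * Real.exp ((1/40:ℝ) * k * Real.log n) ≤ (n:ℝ) ^ (-((k:ℝ)/40)) := by
  have hnpos : (0:ℝ) < n := by positivity
  set ρ : ℝ := Real.exp (-(⌊Real.log n / 5⌋₊:ℝ))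
      + (n:ℝ) ^ (-(1/2):ℝ) * 2 ^ ((⌊Real.log n / 5⌋₊:ℝ)/2) * 2 ^ (⌊Real.log n / 5⌋₊:ℕ) with hρ
  have hρ0 : 0 ≤ ρ := by rw [hρ]; positivity
  have h1 : ρ ^ k ≤ ((n:ℝ) ^ (-(1/20):ℝ)) ^ k := pow_le_pow_left₀ hρ0 (num1 hn hln) k
  have h2 : ((n:ℝ) ^ (-(1/20):ℝ)) ^ k = (n:ℝ) ^ ((-(1/20)) * (k:ℕ) : ℝ) :=
    (Real.rpow_mul_natCast hnpos.le _ _).symm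
  have h3 : Real.exp ((1/40:ℝ) * k * Real.log n) = (n:ℝ) ^ ((1/40) * (k:ℝ) : ℝ) := by
    rw [Real.rpow_def_of_pos hnpos]; ring_nf
  calc ρ ^ k * Real.exp ((1/40:ℝ) * k * Real.log n)
      ≤ ((n:ℝ) ^ (-(1/20):ℝ)) ^ k * Real.exp ((1/40:ℝ) * k * Real.log n) :=
        mul_le_mul_of_nonneg_right h1 (Real.exp_nonneg _)
    _ = (n:ℝ) ^ ((-(1/20)) * (k:ℕ) : ℝ) * (n:ℝ) ^ ((1/40) * (k:ℝ) : ℝ) := by rw [h2, h3]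
    _ = (n:ℝ) ^ ((-(1/20)) * (k:ℕ) + (1/40) * (k:ℝ) : ℝ) := (Real.rpow_add hnpos _ _).symm
    _ = (n:ℝ) ^ (-((k:ℝ)/40)) := by congr 1; ring

lemma low_tail (hmeas : ∀ p, Measurable (U p))
    (hind : iIndepFun U ℙ)
    (hdist : ∀ p, Measure.map (U p) ℙ = (volume : Measure ℝ).restrict (Set.Icc 0 1))
    {n k : ℕ} (hn : 2 ≤ n) (hk : 1 ≤ k) :
    ℙ (Gset U ∩ {ω | (sumZ n k U ω : ℝ) < (1/40:ℝ) * k * Real.log n})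
      ≤ ENNReal.ofReal ((n:ℝ) ^ (-((k:ℝ)/40))) := by
  by_cases hln : Real.log n ≤ 40
  · have hempty : Gset U ∩ {ω | (sumZ n k U ω : ℝ) < (1/40:ℝ) * k * Real.log n} = ∅ := by
      ext ω
      simp only [Set.mem_inter_iff, Set.mem_setOf_eq, Set.mem_empty_iff_false, iff_false,
        not_and]
      intro hG hT
      have h1 := sumZ_ge_k (k := k) hn hG
      have hk0 : (0:ℝ) ≤ k := by positivity
      nlinarith
    rw [hempty]
    simp
  · push_neg at hln
    set a : ℝ := (1/40:ℝ) * k * Real.log n with ha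
    set t₀ : ℕ := ⌊Real.log n / 5⌋₊ with ht₀
    set Flow : Ω → ℝ≥0∞ :=
      fun ω => ∏ i ∈ Finset.range k, rowFun U 2 (clow n t₀) (τlow t₀) φlow i ω with hFlow
    have hFmeas : Measurable Flow :=
      Finset.measurable_prod _ (fun i _ => rowFun_measurable hmeas φlow_meas i)
    have hsub : Gset U ∩ {ω | (sumZ n k U ω : ℝ) < a}
        ⊆ {ω | ENNReal.ofReal (Real.exp (-a)) ≤ Flow ω} := by
      rintro ω ⟨hG, hT⟩
      simp only [Set.mem_setOf_eq] at hT ⊢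
      have hexp : Real.exp (-(sumZ n k U ω : ℝ))
          = ∏ i ∈ Finset.range k, Real.exp (-(hitZ n (fun t => U (i,t)) ω : ℝ)) := by
        rw [sumZ_cast, ← Real.exp_sum]
        congr 1
        rw [← Finset.sum_neg_distrib]
      calc ENNReal.ofReal (Real.exp (-a))
          ≤ ENNReal.ofReal (Real.exp (-(sumZ n k U ω : ℝ))) :=
            ENNReal.ofReal_le_ofReal (Real.exp_le_exp.2 (by linarith))
        _ = ∏ i ∈ Finset.range k,
              ENNReal.ofReal (Real.exp (-(hitZ n (fun t => U (i,t)) ω : ℝ))) := by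
            rw [hexp, ENNReal.ofReal_prod_of_nonneg (fun i _ => Real.exp_nonneg _)]
        _ ≤ Flow ω := Finset.prod_le_prod' (fun i _ => row_low hn (fun t => hG (i,t)) t₀)
    have hmark := meas_ge_le_lintegral_div (μ := ℙ) hFmeas.aemeasurable
        (show ENNReal.ofReal (Real.exp (-a)) ≠ 0 from
          (ENNReal.ofReal_pos.2 (Real.exp_pos _)).ne') ENNReal.ofReal_ne_top
    have hintegral : ∫⁻ ω, Flow ω ∂ℙ
        = (∑ t ∈ Finset.range 2, clow n t₀ t * (2:ℝ≥0∞) ^ (τlow t₀ t)) ^ k :=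
      gen_lintegral hmeas hind φlow_meas (fun p => marg_rpow (hmeas p) (hdist p)) k
    set ρ : ℝ := Real.exp (-(t₀:ℝ))
        + (n:ℝ) ^ (-(1/2):ℝ) * 2 ^ ((t₀:ℝ)/2) * 2 ^ (t₀:ℕ) with hρ
    have hρ0 : (0:ℝ) ≤ ρ := by rw [hρ]; positivity
    have hsum : (∑ t ∈ Finset.range 2, clow n t₀ t * (2:ℝ≥0∞) ^ (τlow t₀ t))
        = ENNReal.ofReal ρ := by
      have c0 : clow n t₀ 0 = ENNReal.ofReal (Real.exp (-(t₀:ℝ))) := by simp [clow]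
      have c1 : clow n t₀ 1 = ENNReal.ofReal ((n:ℝ) ^ (-(1/2):ℝ) * 2 ^ ((t₀:ℝ)/2)) := by
        simp [clow]
      have τ0 : τlow t₀ 0 = 0 := by simp [τlow]
      have τ1 : τlow t₀ 1 = t₀ := by simp [τlow]
      have h2pow : ENNReal.ofReal ((2:ℝ)^(t₀:ℕ)) = (2:ℝ≥0∞)^(t₀:ℕ) := by
        rw [ENNReal.ofReal_pow (by norm_num)]; norm_num
      rw [Finset.sum_range_succ, Finset.sum_range_one, c0, c1, τ0, τ1, pow_zero, mul_one,
        ← h2pow, ← ENNReal.ofReal_mul (by positivity), ← ENNReal.ofReal_add (by positivity)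
        (by positivity), hρ]
    calc ℙ (Gset U ∩ {ω | (sumZ n k U ω : ℝ) < a})
        ≤ ℙ {ω | ENNReal.ofReal (Real.exp (-a)) ≤ Flow ω} := measure_mono hsub
      _ ≤ (∫⁻ ω, Flow ω ∂ℙ) / ENNReal.ofReal (Real.exp (-a)) := hmark
      _ = ENNReal.ofReal (ρ ^ k) / ENNReal.ofReal (Real.exp (-a)) := by
          rw [hintegral, hsum, ← ENNReal.ofReal_pow hρ0]
      _ = ENNReal.ofReal (ρ ^ k * Real.exp a) := by
          rw [div_eq_mul_inv, ← ENNReal.ofReal_inv_of_pos (Real.exp_pos _),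
            Real.exp_neg, inv_inv, ← ENNReal.ofReal_mul (by positivity)]
      _ ≤ ENNReal.ofReal ((n:ℝ) ^ (-((k:ℝ)/40))) :=
          ENNReal.ofReal_le_ofReal (low_num hn hk hln)

lemma up_num {n k : ℕ} (hn : 2 ≤ n) (hk : 1 ≤ k) :
    (Real.sqrt (2*n) * 18) ^ k * ((2:ℝ) ^ ((17 * (k:ℝ) * Real.log n)/2 : ℝ))⁻¹
      ≤ (n:ℝ) ^ (-((k:ℝ)/40)) := by
  have hnpos : (0:ℝ) < n := by positivity
  have hn1 : (1:ℝ) ≤ n := by exact_mod_cast Nat.one_le_of_lt hn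
  have h1 : (Real.sqrt (2*n) * 18) ^ k ≤ ((n:ℝ) ^ ((17/2)*Real.log 2 - 1/20 : ℝ)) ^ k :=
    pow_le_pow_left₀ (by positivity) (num2 hn) k
  have h2 : ((2:ℝ) ^ ((17 * (k:ℝ) * Real.log n)/2 : ℝ))
      = ((n:ℝ) ^ ((17/2)*Real.log 2 : ℝ)) ^ k := by
    rw [Real.rpow_def_of_pos (by norm_num : (0:ℝ) < 2),
      ← Real.rpow_mul_natCast hnpos.le _ k, Real.rpow_def_of_pos hnpos]
    ring_nf
  rw [h2]
  have h3 : (0:ℝ) < ((n:ℝ) ^ ((17/2)*Real.log 2 : ℝ)) ^ k := by positivity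
  rw [← Real.rpow_mul_natCast hnpos.le _ k, ← Real.rpow_neg hnpos.le]
  calc (Real.sqrt (2*n) * 18) ^ k * (n:ℝ) ^ (-(17/2*Real.log 2 * (k:ℕ)) : ℝ)
      ≤ (n:ℝ) ^ ((17/2*Real.log 2 - 1/20) * (k:ℕ) : ℝ)
        * (n:ℝ) ^ (-(17/2*Real.log 2 * (k:ℕ)) : ℝ) := by
        apply mul_le_mul_of_nonneg_right _ (Real.rpow_nonneg hnpos.le _)
        rw [Real.rpow_mul_natCast hnpos.le _ k]
        exact h1
    _ = (n:ℝ) ^ ((17/2*Real.log 2 - 1/20) * (k:ℕ) + -(17/2*Real.log 2 * (k:ℕ)) : ℝ) :=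
        (Real.rpow_add hnpos _ _).symm
    _ ≤ (n:ℝ) ^ (-((k:ℝ)/40)) := by
        apply Real.rpow_le_rpow_of_exponent_le hn1
        have hk0 : (0:ℝ) ≤ k := by positivity
        nlinarith

lemma up_tail (hmeas : ∀ p, Measurable (U p))
    (hind : iIndepFun U ℙ)
    (hdist : ∀ p, Measure.map (U p) ℙ = (volume : Measure ℝ).restrict (Set.Icc 0 1))
    {n k : ℕ} (hn : 2 ≤ n) (hk : 1 ≤ k) :
    ℙ (Gset U ∩ {ω | 17 * k * Real.log n < (sumZ n k U ω : ℝ)})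
      ≤ ENNReal.ofReal ((n:ℝ) ^ (-((k:ℝ)/40))) := by
  set b : ℝ := 17 * k * Real.log n with hb
  set Fup : Ω → ℝ≥0∞ :=
    fun ω => ∏ i ∈ Finset.range k, rowFun U n (cup n) id φup i ω with hFup
  have hFmeas : Measurable Fup :=
    Finset.measurable_prod _ (fun i _ => rowFun_measurable hmeas φup_meas i)
  have hsub : Gset U ∩ {ω | b < (sumZ n k U ω : ℝ)}
      ⊆ {ω | ENNReal.ofReal ((2:ℝ) ^ (b/2 : ℝ)) ≤ Fup ω} := by
    rintro ω ⟨hG, hT⟩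
    simp only [Set.mem_setOf_eq] at hT ⊢
    have hexp : (2:ℝ) ^ ((sumZ n k U ω : ℝ)/2 : ℝ)
        = ∏ i ∈ Finset.range k, (2:ℝ) ^ (((hitZ n (fun t => U (i,t)) ω : ℕ):ℝ)/2 : ℝ) := by
      rw [← Real.rpow_sum_of_pos (by norm_num : (0:ℝ) < 2)]
      congr 1
      rw [sumZ_cast, Finset.sum_div]
    calc ENNReal.ofReal ((2:ℝ) ^ (b/2 : ℝ))
        ≤ ENNReal.ofReal ((2:ℝ) ^ ((sumZ n k U ω : ℝ)/2 : ℝ)) := by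
          apply ENNReal.ofReal_le_ofReal
          apply Real.rpow_le_rpow_of_exponent_le (by norm_num)
          linarith
      _ = ∏ i ∈ Finset.range k,
            ENNReal.ofReal ((2:ℝ) ^ (((hitZ n (fun t => U (i,t)) ω : ℕ):ℝ)/2 : ℝ)) := by
          rw [hexp, ENNReal.ofReal_prod_of_nonneg
            (fun i _ => Real.rpow_nonneg (by norm_num) _)]
      _ ≤ Fup ω := Finset.prod_le_prod' (fun i _ => row_up hn (fun t => hG (i,t)))
  have hmark := meas_ge_le_lintegral_div (μ := ℙ) hFmeas.aemeasurable
      (show ENNReal.ofReal ((2:ℝ) ^ (b/2 : ℝ)) ≠ 0 from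
        (ENNReal.ofReal_pos.2 (Real.rpow_pos_of_pos (by norm_num) _)).ne') ENNReal.ofReal_ne_top
  have hintegral : ∫⁻ ω, Fup ω ∂ℙ
      = (∑ t ∈ Finset.range n, cup n t * (ENNReal.ofReal (2 * Real.sqrt 2 / 3)) ^ (id t)) ^ k :=
    gen_lintegral hmeas hind φup_meas (fun p => marg_sqrt (hmeas p) (hdist p)) k
  have hsum : (∑ t ∈ Finset.range n, cup n t * (ENNReal.ofReal (2 * Real.sqrt 2 / 3)) ^ (id t))
      ≤ ENNReal.ofReal (Real.sqrt (2*n) * 18) := by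
    have e1 : ∀ t, cup n t * (ENNReal.ofReal (2 * Real.sqrt 2 / 3)) ^ (id t)
        = ENNReal.ofReal (Real.sqrt (2*(n:ℝ)) * (2 * Real.sqrt 2 / 3) ^ t) := by
      intro t
      rw [cup, ← ENNReal.ofReal_pow (by positivity), ← ENNReal.ofReal_mul (Real.sqrt_nonneg _)]
      rfl
    rw [show (∑ t ∈ Finset.range n, cup n t * (ENNReal.ofReal (2 * Real.sqrt 2 / 3)) ^ (id t))
        = ∑ t ∈ Finset.range n, ENNReal.ofReal (Real.sqrt (2*(n:ℝ)) * (2 * Real.sqrt 2 / 3) ^ t)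
        from Finset.sum_congr rfl (fun t _ => e1 t)]
    rw [← ENNReal.ofReal_sum_of_nonneg (fun t _ => by positivity)]
    apply ENNReal.ofReal_le_ofReal
    rw [← Finset.mul_sum]
    exact mul_le_mul_of_nonneg_left (geom18 n) (Real.sqrt_nonneg _)
  calc ℙ (Gset U ∩ {ω | b < (sumZ n k U ω : ℝ)})
      ≤ ℙ {ω | ENNReal.ofReal ((2:ℝ) ^ (b/2 : ℝ)) ≤ Fup ω} := measure_mono hsub
    _ ≤ (∫⁻ ω, Fup ω ∂ℙ) / ENNReal.ofReal ((2:ℝ) ^ (b/2 : ℝ)) := hmark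
    _ ≤ (ENNReal.ofReal (Real.sqrt (2*n) * 18)) ^ k / ENNReal.ofReal ((2:ℝ) ^ (b/2 : ℝ)) := by
        apply ENNReal.div_le_div_right
        rw [hintegral]
        exact pow_le_pow_left' hsum k
    _ = ENNReal.ofReal ((Real.sqrt (2*n) * 18) ^ k * ((2:ℝ) ^ (b/2 : ℝ))⁻¹) := by
        rw [div_eq_mul_inv, ← ENNReal.ofReal_inv_of_pos (Real.rpow_pos_of_pos (by norm_num) _),
          ← ENNReal.ofReal_pow (by positivity), ← ENNReal.ofReal_mul (by positivity)]
    _ ≤ ENNReal.ofReal ((n:ℝ) ^ (-((k:ℝ)/40))) := by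
        apply ENNReal.ofReal_le_ofReal
        have h := up_num (n := n) (k := k) hn hk
        rw [hb]
        exact h

lemma per_nk (hmeas : ∀ p, Measurable (U p))
    (hind : iIndepFun U ℙ)
    (hdist : ∀ p, Measure.map (U p) ℙ = (volume : Measure ℝ).restrict (Set.Icc 0 1))
    {n k : ℕ} (hn : 2 ≤ n) (hk : 1 ≤ k) :
    ℙ {ω | ¬((1/40:ℝ) * k * Real.log n ≤ (sumZ n k U ω : ℝ)
        ∧ (sumZ n k U ω : ℝ) ≤ 17 * k * Real.log n)}
      ≤ ENNReal.ofReal (2 * (n:ℝ) ^ (-((k:ℝ)/40))) := by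
  have hsubset : {ω | ¬((1/40:ℝ) * k * Real.log n ≤ (sumZ n k U ω : ℝ)
        ∧ (sumZ n k U ω : ℝ) ≤ 17 * k * Real.log n)}
      ⊆ (Gset U)ᶜ ∪ ((Gset U ∩ {ω | (sumZ n k U ω : ℝ) < (1/40:ℝ) * k * Real.log n})
        ∪ (Gset U ∩ {ω | 17 * k * Real.log n < (sumZ n k U ω : ℝ)})) := by
    intro ω hω
    simp only [Set.mem_setOf_eq, not_and_or, not_le] at hω
    by_cases hG : ω ∈ Gset U
    · right
      rcases hω with h | h
      · left; exact ⟨hG, h⟩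
      · right; exact ⟨hG, h⟩
    · left; exact hG
  calc ℙ {ω | ¬((1/40:ℝ) * k * Real.log n ≤ (sumZ n k U ω : ℝ)
        ∧ (sumZ n k U ω : ℝ) ≤ 17 * k * Real.log n)}
      ≤ ℙ ((Gset U)ᶜ ∪ ((Gset U ∩ {ω | (sumZ n k U ω : ℝ) < (1/40:ℝ) * k * Real.log n})
        ∪ (Gset U ∩ {ω | 17 * k * Real.log n < (sumZ n k U ω : ℝ)}))) := measure_mono hsubset
    _ ≤ ℙ (Gset U)ᶜ + ℙ ((Gset U ∩ {ω | (sumZ n k U ω : ℝ) < (1/40:ℝ) * k * Real.log n})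
        ∪ (Gset U ∩ {ω | 17 * k * Real.log n < (sumZ n k U ω : ℝ)})) := measure_union_le _ _
    _ ≤ ℙ (Gset U)ᶜ + (ℙ (Gset U ∩ {ω | (sumZ n k U ω : ℝ) < (1/40:ℝ) * k * Real.log n})
        + ℙ (Gset U ∩ {ω | 17 * k * Real.log n < (sumZ n k U ω : ℝ)})) := by
        gcongr
        exact measure_union_le _ _
    _ ≤ 0 + (ENNReal.ofReal ((n:ℝ) ^ (-((k:ℝ)/40)))
        + ENNReal.ofReal ((n:ℝ) ^ (-((k:ℝ)/40)))) := by
        gcongr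
        · exact le_of_eq (Gset_compl_null hmeas hdist)
        · exact low_tail hmeas hind hdist hn hk
        · exact up_tail hmeas hind hdist hn hk
    _ = ENNReal.ofReal (2 * (n:ℝ) ^ (-((k:ℝ)/40))) := by
        rw [zero_add, ← ENNReal.ofReal_add (by positivity) (by positivity)]
        congr 1
        ring

lemma nat_bound {n k : ℕ} (hn : 2 ≤ n) (hk : 1 ≤ k) : n + k ≤ 2 * n ^ k := by
  induction k with
  | zero => omega
  | succ k ih =>
    rcases Nat.eq_zero_or_pos k with h | h
    · subst h
      rw [pow_one]
      omega
    · have := ih h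
      have h2 : 2 * n ^ (k+1) = (2 * n ^ k) * n := by ring
      have h3 : (2 * n ^ k) * n ≥ (n + k) * 2 := by
        calc (2 * n ^ k) * n ≥ (n + k) * n := Nat.mul_le_mul_right n this
          _ ≥ (n + k) * 2 := Nat.mul_le_mul_left _ hn
      omega

end CDP


/-- There exist universal constants `0 < c < C` such that for any sequences of
integers `(n_j), (k_j)` with `n_j ≥ 2`, `k_j ≥ 1` and `n_j + k_j → ∞`, the probability
`P( c·k_j·ln n_j ≤ T(n_j,k_j) ≤ C·k_j·ln n_j )` tends to `1` as `j → ∞`, where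
`T(n,k) = Z₁ + ⋯ + Z_k` is a sum of `k` i.i.d. copies of `Z(n)`. -/
theorem cdp_sum_bounds :
    ∃ c C : ℝ, 0 < c ∧ c < C ∧
      ∀ (Ω : Type) (_ : MeasureSpace Ω) (_ : IsProbabilityMeasure (ℙ : Measure Ω))
        (U : ℕ × ℕ → Ω → ℝ), (∀ p, Measurable (U p)) →
        iIndepFun U ℙ →
        (∀ p, Measure.map (U p) ℙ = (volume : Measure ℝ).restrict (Set.Icc 0 1)) →
        ∀ nseq kseq : ℕ → ℕ, (∀ j, 2 ≤ nseq j) → (∀ j, 1 ≤ kseq j) →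
          Tendsto (fun j => nseq j + kseq j) atTop atTop →
          Tendsto
            (fun j => (ℙ {ω |
                c * (kseq j) * Real.log (nseq j) ≤ (sumZ (nseq j) (kseq j) U ω : ℝ) ∧
                (sumZ (nseq j) (kseq j) U ω : ℝ) ≤ C * (kseq j) * Real.log (nseq j)}).toReal)
            atTop (nhds 1) := by
  refine ⟨1/40, 17, by norm_num, by norm_num, ?_⟩
  intro Ω _ inst U hmeas hind hdist nseq kseq hn hk htend
  set good : ℕ → Set Ω := fun j => {ω |
      (1/40 : ℝ) * (kseq j) * Real.log (nseq j) ≤ (sumZ (nseq j) (kseq j) U ω : ℝ) ∧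
      (sumZ (nseq j) (kseq j) U ω : ℝ) ≤ 17 * (kseq j) * Real.log (nseq j)} with hgood
  set ε : ℕ → ℝ := fun j => 2 * (((nseq j + kseq j : ℕ):ℝ)/2) ^ (-(1/40) : ℝ) with hε
  have hε0 : ∀ j, 0 ≤ ε j := by
    intro j
    have h0 : (0:ℕ) < nseq j + kseq j := by have := hn j; omega
    have : (0:ℝ) < ((nseq j + kseq j : ℕ):ℝ)/2 := by positivity
    have := Real.rpow_nonneg this.le (-(1/40) : ℝ)
    rw [hε]; linarith
  have hbound : ∀ j, ℙ (good j)ᶜ ≤ ENNReal.ofReal (ε j) := by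
    intro j
    have hcompl : (good j)ᶜ = {ω | ¬((1/40:ℝ) * (kseq j) * Real.log (nseq j)
        ≤ (sumZ (nseq j) (kseq j) U ω : ℝ)
        ∧ (sumZ (nseq j) (kseq j) U ω : ℝ) ≤ 17 * (kseq j) * Real.log (nseq j))} := by
      rw [hgood]; rfl
    rw [hcompl]
    refine (CDP.per_nk hmeas hind hdist (hn j) (hk j)).trans (ENNReal.ofReal_le_ofReal ?_)
    have hnpos : (0:ℝ) < nseq j := by
      have := hn j
      positivity
    have hcast : ((nseq j:ℝ)) ^ (-(((kseq j):ℝ)/40))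
        = (((nseq j:ℝ)) ^ ((kseq j):ℕ)) ^ (-(1/40):ℝ) := by
      rw [← Real.rpow_natCast ((nseq j:ℝ)) (kseq j), ← Real.rpow_mul hnpos.le]
      congr 1; ring
    have hle : ((nseq j + kseq j : ℕ):ℝ)/2 ≤ ((nseq j:ℝ)) ^ ((kseq j):ℕ) := by
      have h1 := CDP.nat_bound (hn j) (hk j)
      have h2 : ((nseq j + kseq j : ℕ):ℝ) ≤ 2 * ((nseq j:ℝ))^((kseq j):ℕ) := by
        exact_mod_cast h1
      linarith
    have h0 : (0:ℝ) < ((nseq j + kseq j : ℕ):ℝ)/2 := by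
      have h0' : (0:ℕ) < nseq j + kseq j := by have := hn j; omega
      positivity
    have h3 := Real.rpow_le_rpow_of_nonpos h0 hle (by norm_num : (-(1/40):ℝ) ≤ 0)
    rw [hcast, hε]
    linarith
  have hub : ∀ j, (ℙ (good j)).toReal ≤ 1 := by
    intro j
    have := ENNReal.toReal_mono ENNReal.one_ne_top (prob_le_one (μ := ℙ) (s := good j))
    simpa using this
  have hlb : ∀ j, 1 - ε j ≤ (ℙ (good j)).toReal := by
    intro j
    have h1 : (1:ℝ≥0∞) ≤ ℙ (good j) + ℙ (good j)ᶜ := by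
      calc (1:ℝ≥0∞) = ℙ (Set.univ) := measure_univ.symm
        _ = ℙ ((good j) ∪ (good j)ᶜ) := by rw [Set.union_compl_self]
        _ ≤ ℙ (good j) + ℙ (good j)ᶜ := measure_union_le _ _
    have h2 : (1:ℝ≥0∞) ≤ ℙ (good j) + ENNReal.ofReal (ε j) :=
      h1.trans (by gcongr; exact hbound j)
    have hfin : ℙ (good j) ≠ ⊤ := measure_ne_top _ _
    have h3 := ENNReal.toReal_mono
      (by finiteness : ℙ (good j) + ENNReal.ofReal (ε j) ≠ ⊤) h2
    rw [ENNReal.toReal_add hfin ENNReal.ofReal_ne_top, ENNReal.toReal_one,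
      ENNReal.toReal_ofReal (hε0 j)] at h3
    linarith
  have hcast : Tendsto (fun j => ((nseq j + kseq j:ℕ):ℝ)) atTop atTop :=
    tendsto_natCast_atTop_atTop.comp htend
  have hdiv : Tendsto (fun j => ((nseq j + kseq j:ℕ):ℝ)/2) atTop atTop :=
    Tendsto.atTop_div_const (by norm_num) hcast
  have hrpow : Tendsto (fun x:ℝ => x ^ (-(1/40):ℝ)) atTop (nhds 0) :=
    tendsto_rpow_neg_atTop (by norm_num)
  have hεtend : Tendsto ε atTop (nhds 0) := by
    have := (hrpow.comp hdiv).const_mul (2:ℝ)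
    simpa [hε, Function.comp] using this
  have h1tend : Tendsto (fun j => 1 - ε j) atTop (nhds 1) := by
    have h := Tendsto.sub (tendsto_const_nhds : Tendsto (fun _ : ℕ => (1:ℝ)) atTop (nhds 1)) hεtend
    simpa using h
  exact tendsto_of_tendsto_of_tendsto_of_le_of_le h1tend tendsto_const_nhds hlb hub
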